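/- If σ > λ_1/T where λ_1 is the largest eigenvalue of X^T X, then the symmetric matrix σ X^T C_x^{-1} X − X^T X is positive semidefinite. -/

import Mathlib

open Matrix

theorem stmt_4 (n T : ℕ) (X : Matrix (Fin n) (Fin T) ℝ)
    (Cx : Matrix (Fin n) (Fin n) ℝ) (hCx : Cx = (T : ℝ)⁻¹ • (X * Xᵀ))
    (hinv : IsUnit Cx.det)
    (lam1 : ℝ)
    (hlam1_eig : ∃ v : Fin T → ℝ, v ≠ 0 ∧ (Xᵀ * X) *ᵥ v = lam1 • v)
    (hlam1_max : ∀ (c : ℝ) (v : Fin T → ℝ), v ≠ 0 → (Xᵀ * X) *ᵥ v = c • v → c ≤ lam1)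
    (σ : ℝ) (hσ : lam1 < σ * T) :
    (σ • (Xᵀ * Cx⁻¹ * X) - Xᵀ * X).PosSemidef := by
  obtain ⟨v0, hv0, -⟩ := hlam1_eig
  have hT : (T : ℝ) ≠ 0 := by
    rcases Nat.eq_zero_or_pos T with h | h
    · subst h; exact absurd (Subsingleton.elim v0 0) hv0
    · positivity
  -- invertibility of X * Xᵀ
  have hdet : IsUnit (X * Xᵀ).det := by
    rw [hCx, Matrix.det_smul] at hinv
    rcases isUnit_iff_ne_zero.mp hinv with h
    exact isUnit_iff_ne_zero.mpr (fun hz => h (by rw [hz, mul_zero]))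
  set B := (X * Xᵀ)⁻¹ with hB
  have hB1 : (X * Xᵀ) * B = 1 := Matrix.mul_nonsing_inv _ hdet
  have hB2 : B * (X * Xᵀ) = 1 := Matrix.nonsing_inv_mul _ hdet
  -- Cx⁻¹ = T • B
  have hCxinv : Cx⁻¹ = (T : ℝ) • B := by
    apply Matrix.inv_eq_right_inv
    rw [hCx, Matrix.smul_mul, Matrix.mul_smul, smul_smul, inv_mul_cancel₀ hT, one_smul, hB1]
  set P := Xᵀ * B * X with hP
  have hXP : X * P = X := by
    rw [hP, ← Matrix.mul_assoc, ← Matrix.mul_assoc, hB1, Matrix.one_mul]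
  have hPXt : P * Xᵀ = Xᵀ := by
    rw [hP, Matrix.mul_assoc, Matrix.mul_assoc, hB2, Matrix.mul_one]
  have hPsymm : Pᵀ = P := by
    rw [hP, Matrix.transpose_mul, Matrix.transpose_mul, Matrix.transpose_transpose,
      Matrix.mul_assoc]
    congr 1
    rw [hB, Matrix.transpose_nonsing_inv, Matrix.transpose_mul, Matrix.transpose_transpose]
  set M := (σ * T) • (1 : Matrix (Fin T) (Fin T) ℝ) - Xᵀ * X with hM
  have hXtX : (Xᵀ * X).IsHermitian := by
    rw [← Matrix.conjTranspose_eq_transpose_of_trivial]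
    exact Matrix.isHermitian_conjTranspose_mul_self X
  have hMherm : M.IsHermitian := by
    have h1 : ((σ * T) • (1 : Matrix (Fin T) (Fin T) ℝ)).IsHermitian := by
      simp [Matrix.IsHermitian, Matrix.conjTranspose_smul]
    rw [hM]
    exact h1.sub hXtX
  have hMpsd : M.PosSemidef := by
    apply hMherm.posSemidef_iff_eigenvalues_nonneg.mpr
    intro i
    have hev := hMherm.mulVec_eigenvectorBasis i
    set w : Fin T → ℝ := ⇑(hMherm.eigenvectorBasis i) with hw
    have hwne : w ≠ 0 := by
      intro h
      apply hMherm.eigenvectorBasis.orthonormal.ne_zero i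
      ext x
      exact congrFun h x
    have hXw : (Xᵀ * X) *ᵥ w = (σ * T - hMherm.eigenvalues i) • w := by
      rw [sub_smul, ← hev, hM, Matrix.sub_mulVec, Matrix.smul_mulVec,
        Matrix.one_mulVec, sub_sub_cancel]
    have hle := hlam1_max _ w hwne hXw
    rw [Pi.zero_apply]
    linarith
  have hpsd : (P * M * Pᴴ).PosSemidef := hMpsd.mul_mul_conjTranspose_same P
  have hPh : Pᴴ = P := by
    rw [Matrix.conjTranspose_eq_transpose_of_trivial, hPsymm]
  rw [hPh] at hpsd
  have key : σ • (Xᵀ * Cx⁻¹ * X) - Xᵀ * X = P * M * P := by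
    have hPP : P * P = P := by
      rw [hP, Matrix.mul_assoc (Xᵀ * B) X, hXP]
    have h1 : P * (Xᵀ * X) = Xᵀ * X := by rw [← Matrix.mul_assoc, hPXt]
    have hPXXP : P * (Xᵀ * X) * P = Xᵀ * X := by
      rw [h1, Matrix.mul_assoc, hXP]
    have hRHS : P * M * P = (σ * T) • P - Xᵀ * X := by
      rw [hM, Matrix.mul_sub, Matrix.sub_mul, hPXXP, Matrix.mul_smul, Matrix.mul_one,
        Matrix.smul_mul, hPP]
    rw [hRHS, hCxinv, Matrix.mul_smul, Matrix.smul_mul, ← hP, smul_smul]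
  rw [key]
  exact hpsd
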